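/- Let A, B, C be finitely generated abelian groups with B and C free abelian, and let f : A → B, g : B → C, h : C → A be group homomorphisms forming an exact triangle, i.e. im f = ker g, im g = ker h, and im h = ker f. Then rank A ≤ rank B + rank C. Moreover, if rank A = rank B + rank C, then g = 0, the sequence 0 → C → A → B → 0 (with maps h and f) is a short exact sequence, and A is a free abelian group of rank equal to rank B + rank C. -/

import Mathlib

open scoped TensorProduct

/-- The (torsion-free) rank of an abelian group `G`: the dimension over `ℚ` of `G ⊗ ℚ`. -/
noncomputable def abRank (G : Type*) [AddCommGroup G] : ℕ :=
  Module.finrank ℚ (ℚ ⊗[ℤ] G)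

instance : Module.Flat ℤ ℚ := IsLocalization.flat ℚ (nonZeroDivisors ℤ)

open LinearMap in
private lemma baseChange_exact {A B C : Type*} [AddCommGroup A] [AddCommGroup B] [AddCommGroup C]
    (f : A →+ B) (g : B →+ C) (hfg : Function.Exact f g) :
    Function.Exact (f.toIntLinearMap.baseChange ℚ) (g.toIntLinearMap.baseChange ℚ) := by
  have h1 : Function.Exact (f.toIntLinearMap.lTensor ℚ) (g.toIntLinearMap.lTensor ℚ) :=
    Module.Flat.lTensor_exact ℚ hfg
  simpa [LinearMap.baseChange_eq_ltensor] using h1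

private lemma one_tmul_injective (C : Type*) [AddCommGroup C] [Module.Free ℤ C] :
    Function.Injective (fun c : C => (1:ℚ) ⊗ₜ[ℤ] c) := by
  have hinj : Function.Injective ((Algebra.linearMap ℤ ℚ).rTensor C) :=
    Module.Flat.rTensor_preserves_injective_linearMap _
      (fun a b hab => by simpa using hab)
  have h2 := hinj.comp (TensorProduct.lid ℤ C).symm.injective
  convert h2 using 2 with c
  simp

/-- **The "two out of three" rank principle for exact triangles of abelian groups.**
Let `A, B, C` be finitely generated abelian groups with `B` and `C` free abelian, and let
`f : A → B`, `g : B → C`, `h : C → A` form an exact triangle (`im f = ker g`,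
`im g = ker h`, `im h = ker f`).  Then `rank A ≤ rank B + rank C`; moreover, if
`rank A = rank B + rank C`, then `g = 0`, the sequence `0 → C → A → B → 0` (with maps `h`
and `f`) is short exact, and `A` is free abelian of rank `rank B + rank C`. -/
theorem exact_triangle_rank_two_out_of_three
    (A B C : Type*) [AddCommGroup A] [AddCommGroup B] [AddCommGroup C]
    [AddGroup.FG A] [AddGroup.FG B] [AddGroup.FG C]
    [Module.Free ℤ B] [Module.Free ℤ C]
    (f : A →+ B) (g : B →+ C) (h : C →+ A)
    (hfg : Function.Exact f g) (hgh : Function.Exact g h) (hhf : Function.Exact h f) :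
    abRank A ≤ abRank B + abRank C ∧
    (abRank A = abRank B + abRank C →
      g = 0 ∧
      Function.Injective h ∧ Function.Exact h f ∧ Function.Surjective f ∧
      Module.Free ℤ A ∧ abRank A = abRank B + abRank C) := by
  have hA : Module.Finite ℤ A := Module.Finite.iff_addGroup_fg.mpr ‹_›
  have hB : Module.Finite ℤ B := Module.Finite.iff_addGroup_fg.mpr ‹_›
  have hC : Module.Finite ℤ C := Module.Finite.iff_addGroup_fg.mpr ‹_›
  set F := f.toIntLinearMap with hF
  set G := g.toIntLinearMap with hG
  set H := h.toIntLinearMap with hH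
  set F' := F.baseChange ℚ with hF'
  set G' := G.baseChange ℚ with hG'
  set H' := H.baseChange ℚ with hH'
  have eFG : Function.Exact F' G' := baseChange_exact f g hfg
  have eGH : Function.Exact G' H' := baseChange_exact g h hgh
  have eHF : Function.Exact H' F' := baseChange_exact h f hhf
  -- rank-nullity on F'
  have rn : Module.finrank ℚ (LinearMap.range F') + Module.finrank ℚ (LinearMap.ker F')
      = abRank A := LinearMap.finrank_range_add_finrank_ker F'
  have hkerF' : LinearMap.ker F' = LinearMap.range H' :=
    (LinearMap.exact_iff.mp eHF)
  have hrf : Module.finrank ℚ (LinearMap.range F') ≤ abRank B := Submodule.finrank_le _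
  have hrh : Module.finrank ℚ (LinearMap.range H') ≤ abRank C := LinearMap.finrank_range_le H'
  rw [hkerF'] at rn
  constructor
  · omega
  · intro heq
    have hrfB : Module.finrank ℚ (LinearMap.range F') = abRank B := by omega
    -- g = 0
    have hkerG' : LinearMap.ker G' = LinearMap.range F' := LinearMap.exact_iff.mp eFG
    have hGtop : LinearMap.ker G' = ⊤ := by
      apply Submodule.eq_top_of_finrank_eq
      rw [hkerG', hrfB]; rfl
    have hg0 : ∀ b : B, g b = 0 := by
      intro b
      have hb : G' ((1:ℚ) ⊗ₜ[ℤ] b) = 0 := by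
        have : ((1:ℚ) ⊗ₜ[ℤ] b) ∈ LinearMap.ker G' := hGtop ▸ Submodule.mem_top
        simpa using this
      have : (1:ℚ) ⊗ₜ[ℤ] (g b) = (1:ℚ) ⊗ₜ[ℤ] (0:C) := by
        simpa [hG', hG, TensorProduct.tmul_zero] using hb
      exact one_tmul_injective C this
    have hgzero : g = 0 := by ext b; simpa using hg0 b
    -- h injective
    have hinj : Function.Injective h := by
      rw [injective_iff_map_eq_zero]
      intro c hc
      obtain ⟨b, hb⟩ := (hgh c).mp hc
      rw [← hb, hg0 b]
    -- f surjective
    have hsurj : Function.Surjective f := fun b => (hfg b).mp (hg0 b)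
    refine ⟨hgzero, hinj, hhf, hsurj, ?_, heq⟩
    -- A is free: split the exact sequence 0 → C → A → B → 0
    obtain ⟨s, hs⟩ := F.exists_rightInverse_of_surjective
      (LinearMap.range_eq_top.mpr hsurj)
    have hsid : ∀ b : B, F (s b) = b := fun b => congrArg (· b) (congrArg DFunLike.coe hs)
    have hs_inj : Function.Injective s := by
      intro a b hab
      have := congrArg F hab
      rwa [hsid, hsid] at this
    have hcompl : IsCompl (LinearMap.ker F) (LinearMap.range s) := by
      constructor
      · rw [Submodule.disjoint_def]
        rintro x hx ⟨b, rfl⟩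
        have : b = 0 := by
          have := hsid b
          rw [LinearMap.mem_ker.mp hx] at this
          exact this.symm
        rw [this, map_zero]
      · rw [codisjoint_iff, Submodule.eq_top_iff']
        intro x
        refine Submodule.mem_sup.mpr ⟨x - s (F x), ?_, s (F x), ⟨F x, rfl⟩, by abel⟩
        simp [LinearMap.mem_ker, hsid]
    have hkerF : LinearMap.ker F = LinearMap.range H := LinearMap.exact_iff.mp hhf
    have eC : C ≃ₗ[ℤ] LinearMap.ker F := by
      rw [hkerF]
      exact LinearEquiv.ofInjective H hinj
    have eB : B ≃ₗ[ℤ] LinearMap.range s := LinearEquiv.ofInjective s hs_inj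
    have : Module.Free ℤ (LinearMap.ker F) := Module.Free.of_equiv eC
    have : Module.Free ℤ (LinearMap.range s) := Module.Free.of_equiv eB
    exact Module.Free.of_equiv (Submodule.prodEquivOfIsCompl _ _ hcompl)
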